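/- For every d ≥ 1, PBTD(𝓗_d) ≤ 6, where 𝓗_d = {H_{w,b} : w ∈ ℝ^d \ {0}, b ∈ ℝ} is the class of all halfspaces of ℝ^d. -/

import Mathlib

namespace PBT

variable {X : Type*}

/-- A set `L ⊆ X` is consistent with a set `T` of labeled examples
(label `true` = “+”, label `false` = “−”). -/
def Consistent (L : Set X) (T : Set (X × Bool)) : Prop :=
  ∀ p ∈ T, (p.2 = true → p.1 ∈ L) ∧ (p.2 = false → p.1 ∉ L)

/-- `T` is a teaching set for `L` w.r.t. the concept class `𝓛`:
`L` is the only concept in `𝓛` that is consistent with `T`. -/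
def IsTeachingSet (𝓛 : Set (Set X)) (L : Set X) (T : Set (X × Bool)) : Prop :=
  Consistent L T ∧ ∀ L' ∈ 𝓛, Consistent L' T → L' = L

/-- `TD L 𝓛`: least size of a finite teaching set for `L` w.r.t. `𝓛` (`⊤` if none exists). -/
noncomputable def TD (L : Set X) (𝓛 : Set (Set X)) : ℕ∞ :=
  sInf {n : ℕ∞ | ∃ T : Finset (X × Bool), IsTeachingSet 𝓛 L ↑T ∧ n = T.card}

/-- A positive teaching set, identified with its set of (positively labeled) points. -/
def IsPosTeachingSet (𝓛 : Set (Set X)) (L : Set X) (S : Set X) : Prop :=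
  S ⊆ L ∧ ∀ L' ∈ 𝓛, S ⊆ L' → L' = L

/-- least size of a finite positive teaching set for `L` w.r.t. `𝓛` (`⊤` if none exists). -/
noncomputable def TDpos (L : Set X) (𝓛 : Set (Set X)) : ℕ∞ :=
  sInf {n : ℕ∞ | ∃ S : Finset X, IsPosTeachingSet 𝓛 L ↑S ∧ n = S.card}

/-- A strict partial order (preference relation) on concepts:
`pr L' L` means `L` is strictly preferred over `L'`. -/
def StrictPO (pr : Set X → Set X → Prop) : Prop :=
  (∀ A, ¬ pr A A) ∧ ∀ A B C : Set X, pr A B → pr B C → pr A C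

/-- `PBTDord 𝓛 pr = sup_{L ∈ 𝓛} TD(L, 𝓛 \ {L' ∈ 𝓛 | pr L' L})`. -/
noncomputable def PBTDord (𝓛 : Set (Set X)) (pr : Set X → Set X → Prop) : ℕ∞ :=
  ⨆ L ∈ 𝓛, TD L {L' ∈ 𝓛 | ¬ pr L' L}

/-- preference-based teaching dimension of `𝓛`. -/
noncomputable def PBTD (𝓛 : Set (Set X)) : ℕ∞ :=
  sInf {v : ℕ∞ | ∃ pr, StrictPO pr ∧ v = PBTDord 𝓛 pr}

/-- `PBTDposOrd 𝓛 pr = sup_{L ∈ 𝓛} TD⁺(L, 𝓛 \ {L' ∈ 𝓛 | pr L' L})`. -/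
noncomputable def PBTDposOrd (𝓛 : Set (Set X)) (pr : Set X → Set X → Prop) : ℕ∞ :=
  ⨆ L ∈ 𝓛, TDpos L {L' ∈ 𝓛 | ¬ pr L' L}

/-- positive preference-based teaching dimension of `𝓛`. -/
noncomputable def PBTDpos (𝓛 : Set (Set X)) : ℕ∞ :=
  sInf {v : ℕ∞ | ∃ pr, StrictPO pr ∧ v = PBTDposOrd 𝓛 pr}


/-- The class `𝓗_d` of all (affine) halfspaces of `ℝ^d`. -/
def halfspaces (d : ℕ) : Set (Set (EuclideanSpace ℝ (Fin d))) :=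
  {H | ∃ w : EuclideanSpace ℝ (Fin d), w ≠ 0 ∧
        ∃ b : ℝ, H = {x | (0:ℝ) ≤ inner ℝ w x + b}}


open scoped InnerProductSpace

/-- Every halfspace has a representation with a unit normal. -/
lemma exists_unit_rep {d : ℕ} {H : Set (EuclideanSpace ℝ (Fin d))} (h : H ∈ halfspaces d) :
    ∃ p : (EuclideanSpace ℝ (Fin d)) × ℝ, ‖p.1‖ = 1 ∧ H = {x | p.2 ≤ ⟪p.1, x⟫_ℝ} := by
  obtain ⟨w, hw, b, rfl⟩ := h
  have hnw : (0:ℝ) < ‖w‖ := norm_pos_iff.mpr hw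
  have hinv : ‖w‖⁻¹ * ‖w‖ = 1 := inv_mul_cancel₀ hnw.ne'
  refine ⟨(‖w‖⁻¹ • w, -b * ‖w‖⁻¹), ?_, ?_⟩
  · simp only [norm_smul, norm_inv, norm_norm]
    exact hinv
  · ext x
    simp only [Set.mem_setOf_eq, real_inner_smul_left]
    constructor
    · intro hx
      nlinarith [inv_pos.mpr hnw]
    · intro hx
      nlinarith [inv_pos.mpr hnw, hinv]

open Classical in
/-- Chosen unit-normal representation of a halfspace. -/
noncomputable def hsRepr (d : ℕ) (H : Set (EuclideanSpace ℝ (Fin d))) :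
    (EuclideanSpace ℝ (Fin d)) × ℝ :=
  if h : H ∈ halfspaces d then (exists_unit_rep h).choose else (0, 0)

lemma hsRepr_norm {d : ℕ} {H : Set (EuclideanSpace ℝ (Fin d))} (h : H ∈ halfspaces d) :
    ‖(hsRepr d H).1‖ = 1 := by
  unfold hsRepr
  rw [dif_pos h]
  exact (exists_unit_rep h).choose_spec.1

lemma hsRepr_eq {d : ℕ} {H : Set (EuclideanSpace ℝ (Fin d))} (h : H ∈ halfspaces d) :
    H = {x | (hsRepr d H).2 ≤ ⟪(hsRepr d H).1, x⟫_ℝ} := by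
  unfold hsRepr
  rw [dif_pos h]
  exact (exists_unit_rep h).choose_spec.2

/-- A fixed dense sequence in `ℝ^d`. -/
noncomputable def zseq (d : ℕ) : ℕ → EuclideanSpace ℝ (Fin d) :=
  (TopologicalSpace.exists_dense_seq (EuclideanSpace ℝ (Fin d))).choose

lemma zseq_dense (d : ℕ) : DenseRange (zseq d) :=
  (TopologicalSpace.exists_dense_seq (EuclideanSpace ℝ (Fin d))).choose_spec

/-- Some element of the dense sequence lies outside any halfspace. -/
lemma exists_zseq_notMem {d : ℕ} (u : EuclideanSpace ℝ (Fin d)) (hu : ‖u‖ = 1) (c : ℝ) :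
    ∃ n, zseq d n ∉ {x | c ≤ ⟪u, x⟫_ℝ} := by
  have hopen : IsOpen {x : EuclideanSpace ℝ (Fin d) | ⟪u, x⟫_ℝ < c} :=
    isOpen_lt (Continuous.inner continuous_const continuous_id) continuous_const
  have hne : {x : EuclideanSpace ℝ (Fin d) | ⟪u, x⟫_ℝ < c}.Nonempty := by
    refine ⟨(c - 1) • u, ?_⟩
    simp only [Set.mem_setOf_eq, real_inner_smul_right, real_inner_self_eq_norm_mul_norm, hu]
    nlinarith
  obtain ⟨n, hn⟩ := (zseq_dense d).exists_mem_open hopen hne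
  exact ⟨n, fun hmem => absurd hmem (by simpa using not_le.mpr hn)⟩

open Classical in
/-- Least index of a dense-sequence point outside `H`. -/
noncomputable def kidx (d : ℕ) (H : Set (EuclideanSpace ℝ (Fin d))) : ℕ :=
  if h : ∃ n, zseq d n ∉ H then Nat.find h else 0

lemma kidx_le {d : ℕ} {H : Set (EuclideanSpace ℝ (Fin d))} {n : ℕ} (h : zseq d n ∉ H) :
    kidx d H ≤ n := by
  classical
  have hh : ∃ m, zseq d m ∉ H := ⟨n, h⟩
  unfold kidx
  rw [dif_pos hh]
  exact Nat.find_min' hh h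

lemma kidx_spec {d : ℕ} {H : Set (EuclideanSpace ℝ (Fin d))} (h : ∃ n, zseq d n ∉ H) :
    zseq d (kidx d H) ∉ H := by
  classical
  unfold kidx
  rw [dif_pos h]
  exact Nat.find_spec h

/-- Tie-breaking value: distance from the witness point to the boundary. -/
noncomputable def Fval (d : ℕ) (H : Set (EuclideanSpace ℝ (Fin d))) : ℝ :=
  (hsRepr d H).2 - ⟪(hsRepr d H).1, zseq d (kidx d H)⟫_ℝ

/-- The preference relation: prefer larger witness index, then larger `Fval`. -/
def prf (d : ℕ) (A B : Set (EuclideanSpace ℝ (Fin d))) : Prop :=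
  A ∈ halfspaces d ∧ B ∈ halfspaces d ∧
    (kidx d A < kidx d B ∨ (kidx d A = kidx d B ∧ Fval d A < Fval d B))

lemma prf_strictPO (d : ℕ) : StrictPO (prf d) := by
  constructor
  · rintro A ⟨-, -, h | ⟨-, h⟩⟩ <;> exact lt_irrefl _ h
  · rintro A B C ⟨hA, hB, h1⟩ ⟨-, hC, h2⟩
    refine ⟨hA, hC, ?_⟩
    rcases h1 with h1 | ⟨e1, f1⟩ <;> rcases h2 with h2 | ⟨e2, f2⟩
    · exact Or.inl (h1.trans h2)
    · exact Or.inl (e2 ▸ h1)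
    · exact Or.inl (e1 ▸ h2)
    · exact Or.inr ⟨e1.trans e2, f1.trans f2⟩


/-- `PBTD(𝓗_d) ≤ 6` for every `d ≥ 1`. -/
theorem pbtd_halfspaces_le_six (d : ℕ) (hd : 1 ≤ d) :
    PBTD (halfspaces d) ≤ 6 := by
  classical
  have hmain : PBTDord (halfspaces d) (prf d) ≤ 6 := by
    refine iSup₂_le fun L hL => ?_
    -- data of the target halfspace
    set u := (hsRepr d L).1 with hu_def
    set c := (hsRepr d L).2 with hc_def
    have hu : ‖u‖ = 1 := hsRepr_norm hL
    have hLset : L = {x | c ≤ ⟪u, x⟫_ℝ} := hsRepr_eq hL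
    have hex : ∃ n, zseq d n ∉ L := by
      rw [hLset]; exact exists_zseq_notMem u hu c
    set k := kidx d L with hk_def
    have hzk : zseq d k ∉ L := kidx_spec hex
    have hzk' : ⟪u, zseq d k⟫_ℝ < c := by
      by_contra hcon
      exact hzk (by rw [hLset]; exact Set.mem_setOf_eq ▸ not_lt.mp hcon)
    set κ := Fval d L with hκ_def
    have hκ_eq : κ = c - ⟪u, zseq d k⟫_ℝ := rfl
    have hκ : 0 < κ := by rw [hκ_eq]; linarith
    set p : EuclideanSpace ℝ (Fin d) := zseq d k + κ • u with hp_def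
    have hip : ⟪u, p⟫_ℝ = ⟪u, zseq d k⟫_ℝ + κ := by
      rw [hp_def, inner_add_right, real_inner_smul_right,
        real_inner_self_eq_norm_mul_norm, hu]
      ring
    have hpL : p ∈ L := by
      rw [hLset]
      simp only [Set.mem_setOf_eq, hip]
      linarith [hκ_eq ▸ hκ]
    set T : Finset ((EuclideanSpace ℝ (Fin d)) × Bool) :=
      {(zseq d k, false), (p, true)} with hT_def
    have hTS : IsTeachingSet {L' ∈ halfspaces d | ¬ prf d L' L} L ↑T := by
      constructor
      · -- consistency of L
        rintro ⟨x, bb⟩ hmem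
        simp only [hT_def, Finset.coe_insert, Finset.coe_singleton, Set.mem_insert_iff,
          Set.mem_singleton_iff, Prod.mk.injEq] at hmem
        rcases hmem with ⟨hx, hb⟩ | ⟨hx, hb⟩
        · subst hx; subst hb
          exact ⟨fun h => by simp at h, fun _ => hzk⟩
        · subst hx; subst hb
          exact ⟨fun _ => hpL, fun h => by simp at h⟩
      · -- uniqueness
        rintro L' ⟨hL', hnp⟩ hcons
        -- extract the two example conditions
        have hneg : zseq d k ∉ L' := by
          have := hcons (zseq d k, false) (by simp [hT_def])
          exact this.2 rfl
        have hpos : p ∈ L' := by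
          have := hcons (p, true) (by simp [hT_def])
          exact this.1 rfl
        set u' := (hsRepr d L').1 with hu'_def
        set c' := (hsRepr d L').2 with hc'_def
        have hu' : ‖u'‖ = 1 := hsRepr_norm hL'
        have hL'set : L' = {x | c' ≤ ⟪u', x⟫_ℝ} := hsRepr_eq hL'
        -- index of L' equals k
        have hKle : kidx d L' ≤ k := kidx_le hneg
        have hnor : ¬ (kidx d L' < k ∨ (kidx d L' = k ∧ Fval d L' < Fval d L)) :=
          fun h => hnp ⟨hL', hL, h⟩
        push_neg at hnor
        have hKeq : kidx d L' = k := le_antisymm hKle hnor.1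
        have hF' : Fval d L' = c' - ⟪u', zseq d k⟫_ℝ := by
          rw [Fval, ← hu'_def, ← hc'_def, hKeq]
        have hFge : κ ≤ c' - ⟪u', zseq d k⟫_ℝ := by
          rw [← hF']; exact hnor.2 hKeq
        -- the positive example pins the normal
        have hpos' : c' ≤ ⟪u', p⟫_ℝ := by
          rw [hL'set] at hpos; exact hpos
        have hip' : ⟪u', p⟫_ℝ = ⟪u', zseq d k⟫_ℝ + κ * ⟪u', u⟫_ℝ := by
          rw [hp_def, inner_add_right, real_inner_smul_right]
        have hge1 : (1:ℝ) ≤ ⟪u', u⟫_ℝ := by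
          rw [hip'] at hpos'
          nlinarith
        have hle1 : ⟪u', u⟫_ℝ ≤ 1 := by
          have := real_inner_le_norm u' u
          rw [hu, hu'] at this
          linarith
        have huu : u' = u :=
          (inner_eq_one_iff_of_norm_eq_one hu' hu).mp (le_antisymm hle1 hge1)
        -- and then the offset
        have hcc : c' = c := by
          rw [huu] at hpos' hFge
          rw [hip] at hpos'
          linarith
        rw [hL'set, huu, hcc, ← hLset]
    have hmem : (T.card : ℕ∞) ∈
        {n : ℕ∞ | ∃ T' : Finset ((EuclideanSpace ℝ (Fin d)) × Bool),
          IsTeachingSet {L' ∈ halfspaces d | ¬ prf d L' L} L ↑T' ∧ n = T'.card} :=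
      ⟨T, hTS, rfl⟩
    have hcard : T.card ≤ 6 := by
      have h2 : T.card ≤ 2 := by
        rw [hT_def]
        exact (Finset.card_insert_le _ _).trans (by simp)
      omega
    calc TD L {L' ∈ halfspaces d | ¬ prf d L' L} ≤ (T.card : ℕ∞) := sInf_le hmem
      _ ≤ 6 := by exact_mod_cast hcard
  calc PBTD (halfspaces d) ≤ PBTDord (halfspaces d) (prf d) :=
        sInf_le ⟨prf d, prf_strictPO d, rfl⟩
    _ ≤ 6 := hmain

end PBT
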